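/- (Grönwall-type uniqueness) Let ξ be a locally finite Borel measure on [0,∞), and let δ : [0,t] → [0,∞) be a bounded measurable function satisfying δ(u) ≤ K ∫_{[0,u)} δ dξ for all u ∈ [0,t], for some constant K ≥ 0. Then δ ≡ 0 on [0,t]. -/

import Mathlib

open MeasureTheory

/-- Grönwall-type uniqueness: if `ξ` is a locally finite Borel measure, `δ` is a
bounded, nonnegative, measurable function on `[0,t]` satisfying
`δ(u) ≤ K ∫_{[0,u)} δ dξ` for all `u ∈ [0,t]`, then `δ ≡ 0` on `[0,t]`. -/
theorem gronwall_measure_uniqueness (ξ : Measure ℝ) [IsLocallyFiniteMeasure ξ]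
    (t K : ℝ) (hK : 0 ≤ K) (δ : ℝ → ℝ) (hmeas : Measurable δ)
    (hnn : ∀ u ∈ Set.Icc (0:ℝ) t, 0 ≤ δ u)
    (hbdd : ∃ C, ∀ u ∈ Set.Icc (0:ℝ) t, δ u ≤ C)
    (hineq : ∀ u ∈ Set.Icc (0:ℝ) t, δ u ≤ K * ∫ x in Set.Ico (0:ℝ) u, δ x ∂ξ) :
    ∀ u ∈ Set.Icc (0:ℝ) t, δ u = 0 := by
  rcases lt_or_ge t 0 with ht | ht
  · intro u hu; exact absurd (hu.1.trans hu.2) (not_le.mpr ht)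
  obtain ⟨C, hC⟩ := hbdd
  -- finiteness of ξ on compacts
  have hfin : ∀ u : ℝ, ξ (Set.Icc (0:ℝ) u) < ⊤ := fun u => (isCompact_Icc).measure_lt_top
  -- integrability on Ico 0 u for u ≤ t
  have hint : ∀ u ∈ Set.Icc (0:ℝ) t, IntegrableOn δ (Set.Ico 0 u) ξ := by
    intro u hu
    refine Measure.integrableOn_of_bounded (M := max C 0 + |C|)
      ((measure_mono Set.Ico_subset_Icc_self).trans_lt (hfin u)).ne
      hmeas.aestronglyMeasurable ?_
    rw [ae_restrict_iff' measurableSet_Ico]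
    refine Filter.Eventually.of_forall fun x hx => ?_
    have hx' : x ∈ Set.Icc (0:ℝ) t := ⟨hx.1, hx.2.le.trans hu.2⟩
    rw [Real.norm_eq_abs, abs_of_nonneg (hnn x hx')]
    have := hC x hx'
    have : δ x ≤ max C 0 := le_max_of_le_left this
    linarith [abs_nonneg C]
  -- if δ vanishes on [0, w), then δ w = 0
  have hzero : ∀ w ∈ Set.Icc (0:ℝ) t, (∀ v ∈ Set.Ico (0:ℝ) w, δ v = 0) → δ w = 0 := by
    intro w hw hv
    have h1 : δ w ≤ K * ∫ x in Set.Ico (0:ℝ) w, δ x ∂ξ := hineq w hw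
    rw [setIntegral_eq_zero_of_forall_eq_zero hv, mul_zero] at h1
    exact le_antisymm h1 (hnn w hw)
  -- the set of points up to which δ vanishes
  set S : Set ℝ := {u | u ∈ Set.Icc (0:ℝ) t ∧ ∀ v ∈ Set.Icc (0:ℝ) u, δ v = 0} with hS
  have h0S : (0:ℝ) ∈ S := by
    refine ⟨⟨le_refl 0, ht⟩, fun v hv => ?_⟩
    have hv0 : v = 0 := le_antisymm hv.2 hv.1
    subst hv0
    exact hzero 0 ⟨le_refl 0, ht⟩ (fun v hv => absurd (hv.1.trans_lt hv.2) (lt_irrefl 0))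
  have hSne : S.Nonempty := ⟨0, h0S⟩
  have hSbdd : BddAbove S := ⟨t, fun u hu => hu.1.2⟩
  set s := sSup S with hs_def
  have hs0 : 0 ≤ s := le_csSup hSbdd h0S
  have hst : s ≤ t := csSup_le hSne fun u hu => hu.1.2
  have hsIcc : s ∈ Set.Icc (0:ℝ) t := ⟨hs0, hst⟩
  -- δ vanishes on [0, s)
  have hlt : ∀ v ∈ Set.Ico (0:ℝ) s, δ v = 0 := by
    intro v hv
    obtain ⟨u, huS, hvu⟩ := exists_lt_of_lt_csSup hSne hv.2
    exact huS.2 v ⟨hv.1, hvu.le⟩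
  have hδs : δ s = 0 := hzero s hsIcc hlt
  have hsS : s ∈ S := by
    refine ⟨hsIcc, fun v hv => ?_⟩
    rcases lt_or_eq_of_le hv.2 with h | h
    · exact hlt v ⟨hv.1, h⟩
    · rw [h]; exact hδs
  -- show s = t
  have hseq : s = t := by
    by_contra hne
    have hslt : s < t := lt_of_le_of_ne hst hne
    -- choose ε = 1/(n+1) with s + ε ≤ t and K * ξ(Ioc s (s+ε)) small
    have htend : Filter.Tendsto (fun n : ℕ => ξ (Set.Ioc s (s + 1 / (n + 1))))
        Filter.atTop (nhds 0) := by
      have h1 : Filter.Tendsto (ξ ∘ fun n : ℕ => Set.Ioc s (s + 1 / (n + 1)))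
          Filter.atTop (nhds (ξ (⋂ n : ℕ, Set.Ioc s (s + 1 / (n + 1))))) := by
        refine tendsto_measure_iInter_atTop
          (fun n => measurableSet_Ioc.nullMeasurableSet) ?_ ⟨0, ?_⟩
        · intro m n hmn
          apply Set.Ioc_subset_Ioc le_rfl
          have h1n : (1:ℝ) / (n + 1) ≤ 1 / (m + 1) := by
            apply one_div_le_one_div_of_le (by positivity)
            exact_mod_cast add_le_add_left (Nat.cast_le.mpr hmn) 1
          linarith
        · exact ((measure_mono (Set.Ioc_subset_Icc_self.trans
            (Set.Icc_subset_Icc hs0 le_rfl))).trans_lt (hfin _)).ne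
      have h2 : (⋂ n : ℕ, Set.Ioc s (s + 1 / (n + 1))) = ∅ := by
        rw [Set.eq_empty_iff_forall_notMem]
        intro x hx
        rw [Set.mem_iInter] at hx
        have hxs : 0 < x - s := sub_pos.mpr (hx 0).1
        obtain ⟨n, hn⟩ := exists_nat_gt (1 / (x - s))
        have h1n : 1 / (x - s) < (n : ℝ) + 1 := hn.trans (lt_add_one _)
        have hlt' : 1 / ((n : ℝ) + 1) < x - s := by
          rw [div_lt_iff₀ hxs] at h1n
          rw [div_lt_iff₀ (by positivity)]
          linarith [mul_comm ((n:ℝ) + 1) (x - s)]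
        linarith [(hx n).2]
      rw [h2, measure_empty] at h1
      exact h1
    have hsmall : ∀ᶠ n : ℕ in Filter.atTop,
        ξ (Set.Ioc s (s + 1 / (n + 1))) < ENNReal.ofReal (1 / (2 * (K + 1))) := by
      refine htend.eventually_lt_const ?_
      simp only [ENNReal.ofReal_pos]
      positivity
    have hle : ∀ᶠ n : ℕ in Filter.atTop, s + 1 / ((n : ℝ) + 1) ≤ t := by
      have : Filter.Tendsto (fun n : ℕ => s + 1 / ((n : ℝ) + 1)) Filter.atTop (nhds (s + 0)) :=
        tendsto_const_nhds.add (tendsto_one_div_add_atTop_nhds_zero_nat)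
      rw [add_zero] at this
      exact this.eventually_le_const hslt
    obtain ⟨n, hn1, hn2⟩ := (hsmall.and hle).exists
    set ε : ℝ := 1 / ((n : ℝ) + 1) with hε_def
    have hε : 0 < ε := by positivity
    -- sup of δ on [s, s+ε]
    set M := sSup (δ '' Set.Icc s (s + ε)) with hM_def
    have hsub : Set.Icc s (s + ε) ⊆ Set.Icc (0:ℝ) t :=
      Set.Icc_subset_Icc hs0 hn2
    have hMne : (δ '' Set.Icc s (s + ε)).Nonempty :=
      ⟨δ s, Set.mem_image_of_mem δ ⟨le_rfl, by linarith⟩⟩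
    have hMbdd : BddAbove (δ '' Set.Icc s (s + ε)) := by
      refine ⟨C, fun y hy => ?_⟩
      obtain ⟨x, hx, rfl⟩ := hy
      exact hC x (hsub hx)
    have hM0 : 0 ≤ M := by
      have := le_csSup hMbdd (Set.mem_image_of_mem δ (⟨le_rfl, by linarith⟩ :
        s ∈ Set.Icc s (s + ε)))
      rw [hδs] at this
      exact this
    -- measure bound
    have hmeasbd : (ξ (Set.Ioc s (s + ε))).toReal ≤ 1 / (2 * (K + 1)) :=
      ENNReal.toReal_le_of_le_ofReal (by positivity) hn1.le
    -- bound δ on (s, s+ε]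
    have hbound : ∀ u ∈ Set.Icc s (s + ε), δ u ≤ M / 2 := by
      intro u hu
      rcases eq_or_lt_of_le hu.1 with h | h
      · rw [← h, hδs]; positivity
      have huIcc : u ∈ Set.Icc (0:ℝ) t := hsub hu
      have h1 : δ u ≤ K * ∫ x in Set.Ico (0:ℝ) u, δ x ∂ξ := hineq u huIcc
      -- split the integral
      have hunion : Set.Ico (0:ℝ) u = Set.Icc 0 s ∪ Set.Ioo s u := by
        ext x
        simp only [Set.mem_Ico, Set.mem_union, Set.mem_Icc, Set.mem_Ioo]
        constructor
        · rintro ⟨hx0, hxu⟩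
          rcases le_or_gt x s with h' | h'
          · exact Or.inl ⟨hx0, h'⟩
          · exact Or.inr ⟨h', hxu⟩
        · rintro (⟨hx0, hxs⟩ | ⟨hxs, hxu⟩)
          · exact ⟨hx0, hxs.trans_lt h⟩
          · exact ⟨hs0.trans hxs.le, hxu⟩
      have hdisj : Disjoint (Set.Icc (0:ℝ) s) (Set.Ioo s u) :=
        Set.disjoint_left.mpr fun x hx hx' => absurd hx.2 (not_le.mpr hx'.1)
      have hint' : IntegrableOn δ (Set.Ico 0 u) ξ := hint u huIcc
      have hi1 : IntegrableOn δ (Set.Icc (0:ℝ) s) ξ := by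
        refine hint'.mono_set ?_
        rw [hunion]; exact Set.subset_union_left
      have hi2 : IntegrableOn δ (Set.Ioo s u) ξ := by
        refine hint'.mono_set ?_
        rw [hunion]; exact Set.subset_union_right
      have hsplit : ∫ x in Set.Ico (0:ℝ) u, δ x ∂ξ
          = (∫ x in Set.Icc (0:ℝ) s, δ x ∂ξ) + ∫ x in Set.Ioo s u, δ x ∂ξ := by
        rw [hunion]
        exact setIntegral_union hdisj measurableSet_Ioo hi1 hi2
      have hz1 : ∫ x in Set.Icc (0:ℝ) s, δ x ∂ξ = 0 :=
        setIntegral_eq_zero_of_forall_eq_zero (fun x hx => hsS.2 x hx)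
      -- bound the second integral
      have hfin2 : ξ (Set.Ioo s u) < ⊤ :=
        (measure_mono (fun x hx => Set.mem_Icc.mpr
          ⟨hs0.trans hx.1.le, hx.2.le.trans huIcc.2⟩)).trans_lt (hfin t)
      have hbd2 : ∀ x ∈ Set.Ioo s u, ‖δ x‖ ≤ M := by
        intro x hx
        have hxIcc : x ∈ Set.Icc s (s + ε) := ⟨hx.1.le, hx.2.le.trans hu.2⟩
        rw [Real.norm_eq_abs, abs_of_nonneg (hnn x (hsub hxIcc))]
        exact le_csSup hMbdd (Set.mem_image_of_mem δ hxIcc)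
      have h2 : ∫ x in Set.Ioo s u, δ x ∂ξ ≤ M * (ξ (Set.Ioo s u)).toReal := by
        calc ∫ x in Set.Ioo s u, δ x ∂ξ ≤ ‖∫ x in Set.Ioo s u, δ x ∂ξ‖ := le_abs_self _
        _ ≤ M * (ξ (Set.Ioo s u)).toReal :=
          norm_setIntegral_le_of_norm_le_const hfin2 hbd2
      have hmono : (ξ (Set.Ioo s u)).toReal ≤ (ξ (Set.Ioc s (s + ε))).toReal := by
        refine ENNReal.toReal_mono (hn1.trans_le le_top).ne (measure_mono ?_)
        exact fun x hx => ⟨hx.1, hx.2.le.trans hu.2⟩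
      have h3 : ∫ x in Set.Ioo s u, δ x ∂ξ ≤ M * (1 / (2 * (K + 1))) := by
        calc ∫ x in Set.Ioo s u, δ x ∂ξ ≤ M * (ξ (Set.Ioo s u)).toReal := h2
        _ ≤ M * (1 / (2 * (K + 1))) := by
            exact mul_le_mul_of_nonneg_left (hmono.trans hmeasbd) hM0
      calc δ u ≤ K * ∫ x in Set.Ico (0:ℝ) u, δ x ∂ξ := h1
      _ = K * ∫ x in Set.Ioo s u, δ x ∂ξ := by rw [hsplit, hz1, zero_add]
      _ ≤ K * (M * (1 / (2 * (K + 1)))) := mul_le_mul_of_nonneg_left h3 hK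
      _ ≤ M / 2 := by
          have hK1 : (0:ℝ) < K + 1 := by linarith
          rw [mul_one_div, ← mul_div_assoc, div_le_div_iff₀ (by positivity) two_pos]
          nlinarith [mul_nonneg hK hM0]
    -- conclude M ≤ M/2 hence M = 0
    have hMle : M ≤ M / 2 := by
      refine csSup_le hMne ?_
      rintro y ⟨x, hx, rfl⟩
      exact hbound x hx
    have hM_zero : M = 0 := by linarith
    -- δ vanishes on [0, s+ε], so s+ε ∈ S, contradiction
    have hnew : s + ε ∈ S := by
      refine ⟨⟨by linarith, hn2⟩, fun v hv => ?_⟩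
      rcases le_or_gt v s with h | h
      · exact hsS.2 v ⟨hv.1, h⟩
      · have hvIcc : v ∈ Set.Icc s (s + ε) := ⟨h.le, hv.2⟩
        have h1 := hbound v hvIcc
        rw [hM_zero] at h1
        have h2 := hnn v (hsub hvIcc)
        linarith
    have : s + ε ≤ s := le_csSup hSbdd hnew
    linarith
  intro u hu
  rw [← hseq] at hu
  exact hsS.2 u hu
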